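/- Let μ̂, δ̂, χ̂, ĉ, a11, a12, a21, a22 be real numbers. Consider the 2×2 complex matrix A with rows (a11 − μ̂ − i·ĉ, a12 + χ̂) and (a21, a22 − δ̂). Set Δ2 = μ̂ + δ̂ − a11 − a22 and Δ4 = (ĉ² + Δ2²)(δ̂ − a22)(μ̂ − a11) − a21·Δ2²·(a12 + χ̂). If Δ2 > 0 and Δ4 > 0, then every eigenvalue λ ∈ ℂ of A (i.e., every λ for which A·v = λ·v has a nonzero solution v ∈ ℂ²) satisfies Re λ < 0. -/
import Mathlib

set_option maxHeartbeats 1000000 in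
/-- If Δ2 > 0 and Δ4 > 0, every eigenvalue of the 2×2 stability matrix has
negative real part (all normal modes stable). -/
theorem stmt_1 (mu de ch c a11 a12 a21 a22 : ℝ)
    (hΔ2 : 0 < mu + de - a11 - a22)
    (hΔ4 : 0 < (c ^ 2 + (mu + de - a11 - a22) ^ 2) * ((de - a22) * (mu - a11))
              - a21 * (mu + de - a11 - a22) ^ 2 * (a12 + ch)) :
    let A : Matrix (Fin 2) (Fin 2) ℂ :=
      !![(a11 : ℂ) - (mu : ℂ) - Complex.I * (c : ℂ), (a12 : ℂ) + (ch : ℂ);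
         (a21 : ℂ), (a22 : ℂ) - (de : ℂ)]
    ∀ (lam : ℂ) (v : Fin 2 → ℂ), v ≠ 0 → A.mulVec v = lam • v → lam.re < 0 := by
  intro A lam v hv hAv
  -- (A - lam • 1) has nontrivial kernel, hence zero determinant
  have hker : (A - lam • (1 : Matrix (Fin 2) (Fin 2) ℂ)).mulVec v = 0 := by
    rw [Matrix.sub_mulVec, Matrix.smul_mulVec, Matrix.one_mulVec, hAv, sub_self]
  have hdet : (A - lam • (1 : Matrix (Fin 2) (Fin 2) ℂ)).det = 0 := by
    rw [← Matrix.exists_mulVec_eq_zero_iff]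
    exact ⟨v, hv, hker⟩
  have hdet2 : ((a11 : ℂ) - mu - Complex.I * c - lam) * ((a22 : ℂ) - de - lam)
      - ((a12 : ℂ) + ch) * a21 = 0 := by
    have := hdet
    simp [A, Matrix.det_fin_two, Matrix.sub_apply, Matrix.smul_apply, Matrix.one_apply] at this
    ring_nf at this ⊢
    linear_combination this
  set x := lam.re with hx
  set y := lam.im with hy
  have hre := congrArg Complex.re hdet2
  have him := congrArg Complex.im hdet2
  simp [Complex.sub_re, Complex.sub_im, Complex.mul_re, Complex.mul_im, Complex.add_re,
    Complex.add_im, Complex.ofReal_re, Complex.ofReal_im, Complex.I_re, Complex.I_im] at hre him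
  by_contra hxe
  push_neg at hxe
  set d2 := mu + de - a11 - a22 with hd2
  -- characteristic-root real relation F(x) = 0
  have hF : ((x - (a11 - mu)) * (x - (a22 - de)) - (a12 + ch) * a21) * (2*x + d2)^2
      + c^2 * (x - (a11 - mu)) * (x - (a22 - de)) = 0 := by
    linear_combination ((2*x + d2)^2) * hre
      + (y*(2*x+d2) + c*((a22 - de) - x) + c*(2*x+d2)) * him
  have h2x : 0 < 2*x + d2 := by linarith
  have hK : 0 < (2*x + d2)^2 := pow_pos h2x 2
  have he : 0 ≤ x^2 + d2*x := add_nonneg (sq_nonneg x) (mul_nonneg hΔ2.le hxe)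
  have key : d2^2 * (((x - (a11 - mu)) * (x - (a22 - de)) - (a12 + ch) * a21) * (2*x + d2)^2
      + c^2 * (x - (a11 - mu)) * (x - (a22 - de)))
      = (2*x + d2)^2 * ((c ^ 2 + d2 ^ 2) * ((de - a22) * (mu - a11))
          - a21 * d2 ^ 2 * (a12 + ch))
        + (x^2 + d2*x) * (d2^2 * (2*x + d2)^2 + c^2 * ((a11 - mu) - (a22 - de))^2) := by
    rw [hd2]; ring
  rw [hF, mul_zero] at key
  have hT1 : 0 < (2*x + d2)^2 * ((c ^ 2 + d2 ^ 2) * ((de - a22) * (mu - a11))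
      - a21 * d2 ^ 2 * (a12 + ch)) := mul_pos hK hΔ4
  have hT2 : 0 ≤ (x^2 + d2*x) * (d2^2 * (2*x + d2)^2 + c^2 * ((a11 - mu) - (a22 - de))^2) :=
    mul_nonneg he (by positivity)
  linarith [key, hT1, hT2]
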